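/- For any finite simple graph G on n vertices with Laplacian L and any positive integer k, 1 ≤ det(I + k·L) ≤ (1 + k·n)^{n-1}. -/

import Mathlib

open Matrix SimpleGraph

private lemma my_psd_smul {n : ℕ} {M : Matrix (Fin n) (Fin n) ℝ} (hM : M.PosSemidef) {c : ℝ}
    (hc : 0 ≤ c) : (c • M).PosSemidef := by
  refine posSemidef_iff_dotProduct_mulVec.mpr ⟨?_, fun x => ?_⟩
  · unfold Matrix.IsHermitian
    rw [conjTranspose_smul, star_trivial, hM.1]
  · rw [smul_mulVec, dotProduct_smul, smul_eq_mul]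
    exact mul_nonneg hc (hM.dotProduct_mulVec_nonneg x)

private lemma my_psd_add {n : ℕ} {A B : Matrix (Fin n) (Fin n) ℝ} (hA : A.PosSemidef)
    (hB : B.PosSemidef) : (A + B).PosSemidef := hA.add hB

private lemma my_psd_J {n : ℕ} : (Matrix.of (fun _ _ : Fin n => (1 : ℝ))).PosSemidef := by
  refine posSemidef_iff_dotProduct_mulVec.mpr ⟨?_, fun x => ?_⟩
  · unfold Matrix.IsHermitian
    ext i j; simp [conjTranspose_apply]
  · have : dotProduct (star x) ((Matrix.of (fun _ _ : Fin n => (1 : ℝ))) *ᵥ x)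
        = (∑ i, x i) * (∑ i, x i) := by
      simp [dotProduct, mulVec, Finset.sum_mul]
    rw [this]
    exact mul_self_nonneg _

private lemma my_eig_le {n : ℕ} {M : Matrix (Fin n) (Fin n) ℝ} (hM : M.IsHermitian) {c : ℝ}
    (h : (c • (1 : Matrix (Fin n) (Fin n) ℝ) - M).PosSemidef) (i : Fin n) :
    hM.eigenvalues i ≤ c := by
  set v : Fin n → ℝ := ⇑(hM.eigenvectorBasis i) with hv
  have hmv : M *ᵥ v = hM.eigenvalues i • v := hM.mulVec_eigenvectorBasis i
  have hvne : v ≠ 0 := by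
    intro h0
    exact hM.eigenvectorBasis.orthonormal.ne_zero i (by ext j; exact congrFun h0 j)
  have hnn : 0 ≤ dotProduct v v := Finset.sum_nonneg fun j _ => mul_self_nonneg (v j)
  have hpos : 0 < dotProduct v v := by
    rcases hnn.eq_or_lt with he | hl
    · exact absurd (dotProduct_self_eq_zero.mp he.symm) hvne
    · exact hl
  have h2 := h.dotProduct_mulVec_nonneg v
  rw [sub_mulVec, smul_mulVec, one_mulVec, hmv, dotProduct_sub, dotProduct_smul,
    dotProduct_smul, star_trivial, smul_eq_mul, smul_eq_mul, ← sub_mul] at h2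
  nlinarith [h2, hpos]

private lemma my_le_eig {n : ℕ} {M : Matrix (Fin n) (Fin n) ℝ} (hM : M.IsHermitian) {c : ℝ}
    (h : (M - c • (1 : Matrix (Fin n) (Fin n) ℝ)).PosSemidef) (i : Fin n) :
    c ≤ hM.eigenvalues i := by
  set v : Fin n → ℝ := ⇑(hM.eigenvectorBasis i) with hv
  have hmv : M *ᵥ v = hM.eigenvalues i • v := hM.mulVec_eigenvectorBasis i
  have hvne : v ≠ 0 := by
    intro h0
    exact hM.eigenvectorBasis.orthonormal.ne_zero i (by ext j; exact congrFun h0 j)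
  have hnn : 0 ≤ dotProduct v v := Finset.sum_nonneg fun j _ => mul_self_nonneg (v j)
  have hpos : 0 < dotProduct v v := by
    rcases hnn.eq_or_lt with he | hl
    · exact absurd (dotProduct_self_eq_zero.mp he.symm) hvne
    · exact hl
  have h2 := h.dotProduct_mulVec_nonneg v
  rw [sub_mulVec, smul_mulVec, one_mulVec, hmv, dotProduct_sub, dotProduct_smul,
    dotProduct_smul, star_trivial, smul_eq_mul, smul_eq_mul, ← sub_mul] at h2
  nlinarith [h2, hpos]

theorem det_one_add_smul_lapMatrix_bounds
    {n : ℕ} (G : SimpleGraph (Fin n)) [DecidableRel G.Adj] (k : ℕ) (hk : 0 < k) :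
    1 ≤ (1 + (k : ℤ) • G.lapMatrix ℤ).det ∧
    (1 + (k : ℤ) • G.lapMatrix ℤ).det ≤ (1 + (k : ℤ) * n) ^ (n - 1) := by
  rcases Nat.eq_zero_or_pos n with hn0 | hn
  · subst hn0
    simp [Matrix.det_isEmpty]
  -- Work over ℝ
  set L : Matrix (Fin n) (Fin n) ℝ := G.lapMatrix ℝ with hL
  set M : Matrix (Fin n) (Fin n) ℝ := 1 + (k : ℝ) • L with hMdef
  have hcast : ((1 + (k : ℤ) • G.lapMatrix ℤ).det : ℝ) = M.det := by
    have h := RingHom.map_det (Int.castRingHom ℝ) (1 + (k : ℤ) • G.lapMatrix ℤ)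
    rw [eq_intCast] at h
    rw [h]
    congr 1
    ext i j
    simp only [RingHom.mapMatrix_apply, Matrix.map_apply, Matrix.add_apply, Matrix.smul_apply,
      Matrix.sub_apply, lapMatrix, degMatrix, adjMatrix, Matrix.of_apply, Matrix.one_apply,
      Matrix.diagonal_apply, smul_eq_mul, hMdef, hL]
    split_ifs <;> rw [eq_intCast] <;> push_cast <;> ring
  have hkR : (0 : ℝ) ≤ (k : ℝ) := Nat.cast_nonneg k
  have hLpsd : L.PosSemidef := posSemidef_lapMatrix ℝ G
  have hkL : ((k : ℝ) • L).PosSemidef := my_psd_smul hLpsd hkR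
  have hM : M.IsHermitian := by
    have h1 : (1 : Matrix (Fin n) (Fin n) ℝ).IsHermitian := isHermitian_one
    exact h1.add hkL.1
  -- lower bound on eigenvalues
  have hlow : ∀ i, 1 ≤ hM.eigenvalues i := by
    intro i
    apply my_le_eig hM (c := 1)
    have : M - (1 : ℝ) • (1 : Matrix (Fin n) (Fin n) ℝ) = (k : ℝ) • L := by
      rw [one_smul, hMdef, add_sub_cancel_left]
    rw [this]; exact hkL
  -- the key matrix identity: n•1 - L = lap(Gᶜ) + J
  have hid : (n : ℝ) • (1 : Matrix (Fin n) (Fin n) ℝ) - L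
      = Gᶜ.lapMatrix ℝ + Matrix.of (fun _ _ : Fin n => (1 : ℝ)) := by
    ext i j
    by_cases hij : i = j
    · subst hij
      have hdeg : Gᶜ.degree i = n - 1 - G.degree i := by
        simpa [Fintype.card_fin] using SimpleGraph.degree_compl (G := G) (v := i)
      have hdle : G.degree i ≤ n - 1 := by
        have := G.degree_lt_card_verts i
        simp only [Fintype.card_fin] at this
        omega
      simp only [hL, Matrix.sub_apply, Matrix.smul_apply, Matrix.one_apply_eq, smul_eq_mul,
        mul_one, Matrix.add_apply, Matrix.of_apply, lapMatrix, degMatrix, adjMatrix,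
        Matrix.sub_apply, Matrix.diagonal_apply_eq, Matrix.of_apply]
      rw [if_neg (G.irrefl), if_neg (Gᶜ.irrefl), hdeg,
        Nat.cast_sub hdle, Nat.cast_sub (show 1 ≤ n by omega)]
      push_cast
      ring
    · simp only [hL, Matrix.sub_apply, Matrix.smul_apply, Matrix.one_apply_ne hij, smul_eq_mul,
        mul_zero, Matrix.add_apply, Matrix.of_apply, lapMatrix, degMatrix, adjMatrix,
        Matrix.sub_apply, Matrix.diagonal_apply_ne _ hij, Matrix.of_apply]
      by_cases hadj : G.Adj i j
      · rw [if_pos hadj, if_neg (by simp [compl_adj, hadj])]; ring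
      · rw [if_neg hadj, if_pos (by simp [compl_adj, hij, hadj])]; ring
  -- upper bound on eigenvalues
  have hup : ∀ i, hM.eigenvalues i ≤ 1 + (k : ℝ) * n := by
    intro i
    apply my_eig_le hM
    have heq : (1 + (k : ℝ) * n) • (1 : Matrix (Fin n) (Fin n) ℝ) - M
        = (k : ℝ) • ((n : ℝ) • (1 : Matrix (Fin n) (Fin n) ℝ) - L) := by
      rw [hMdef]
      ext i j
      simp [Matrix.sub_apply, Matrix.smul_apply, Matrix.add_apply, smul_eq_mul]
      ring
    rw [heq, hid]
    exact my_psd_smul (my_psd_add (posSemidef_lapMatrix ℝ Gᶜ) my_psd_J) hkR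
  -- one eigenvalue equals 1
  have hones : M *ᵥ (fun _ => (1 : ℝ)) = fun _ => (1 : ℝ) := by
    rw [hMdef, add_mulVec, one_mulVec, smul_mulVec, lapMatrix_mulVec_const_eq_zero]
    simp
  have hspec : (1 : ℝ) ∈ spectrum ℝ M := by
    rw [spectrum.mem_iff]
    intro hu
    rw [Matrix.isUnit_iff_isUnit_det] at hu
    have hdet0 : (algebraMap ℝ (Matrix (Fin n) (Fin n) ℝ) 1 - M).det = 0 := by
      rw [← Matrix.exists_mulVec_eq_zero_iff]
      refine ⟨fun _ => 1, ?_, ?_⟩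
      · intro h0
        have := congrFun h0 ⟨0, hn⟩
        simp at this
      · rw [sub_mulVec, hones]
        simp [Algebra.algebraMap_eq_smul_one]
    rw [hdet0] at hu
    exact (by simp : ¬ IsUnit (0:ℝ)) hu
  obtain ⟨i₀, hi₀⟩ := by
    rw [hM.spectrum_real_eq_range_eigenvalues] at hspec
    exact hspec
  -- determinant as product of eigenvalues
  have hdet : M.det = ∏ i, hM.eigenvalues i := by
    rw [hM.det_eq_prod_eigenvalues]
    norm_num
  have hlowdet : (1 : ℝ) ≤ M.det := by
    rw [hdet]
    have := Finset.prod_le_prod (s := Finset.univ) (f := fun _ : Fin n => (1 : ℝ))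
      (g := hM.eigenvalues) (fun i _ => zero_le_one) (fun i _ => hlow i)
    simpa using this
  have hupdet : M.det ≤ (1 + (k : ℝ) * n) ^ (n - 1) := by
    rw [hdet, ← Finset.prod_erase_mul Finset.univ _ (Finset.mem_univ i₀), hi₀, mul_one]
    calc ∏ i ∈ Finset.univ.erase i₀, hM.eigenvalues i
        ≤ ∏ _i ∈ Finset.univ.erase i₀, (1 + (k : ℝ) * n) := by
          apply Finset.prod_le_prod
          · exact fun i _ => le_trans zero_le_one (hlow i)
          · exact fun i _ => hup i
      _ = (1 + (k : ℝ) * n) ^ (n - 1) := by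
          rw [Finset.prod_const, Finset.card_erase_of_mem (Finset.mem_univ i₀),
            Finset.card_univ, Fintype.card_fin]
  constructor
  · have : ((1 : ℤ) : ℝ) ≤ ((1 + (k : ℤ) • G.lapMatrix ℤ).det : ℝ) := by
      rw [hcast]; exact_mod_cast hlowdet
    exact_mod_cast this
  · have : ((1 + (k : ℤ) • G.lapMatrix ℤ).det : ℝ) ≤ (((1 + (k : ℤ) * n) ^ (n - 1) : ℤ) : ℝ) := by
      rw [hcast]; push_cast; exact hupdet
    exact_mod_cast this
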